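/- Let σ : ℝ → ℝ be C¹ with M₁ ≤ σ′(x) ≤ M₂ for all x ∈ ℝ, where 0 < M₁ ≤ M₂, σ(0) = 0 and x·σ(x) ≥ 0 for all x. Let W be a finite-dimensional subspace of L²(ℝ) ∩ L^∞(ℝ) and let P_W denote the orthogonal projection of L²(ℝ) onto W. Then for every f ∈ W, ‖P_W(σ∘f)‖₂ ≥ M₁ ‖f‖₂. -/

import Mathlib

set_option synthInstance.maxHeartbeats 1000000

/-!
Statement 7: if σ is C¹ with 0 < M₁ ≤ σ′ ≤ M₂, σ(0) = 0 and x·σ(x) ≥ 0, and W is a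
finite-dimensional subspace of L²(ℝ) ∩ L^∞(ℝ), then ‖P_W(σ∘f)‖₂ ≥ M₁‖f‖₂ for f ∈ W.
-/

open MeasureTheory Real
open scoped Classical

/-- The Hilbert space `L²(ℝ)`. -/
noncomputable abbrev H : Type := MeasureTheory.Lp ℝ 2 (volume : Measure ℝ)

/-- The class in `L²(ℝ)` of a function (zero if the function is not square integrable). -/
noncomputable def toLp2 (f : ℝ → ℝ) : H :=
  if h : MemLp f 2 volume then h.toLp f else 0

open scoped RealInnerProductSpace

theorem norm_proj_nemytskii_ge
    (M₁ M₂ : ℝ) (hM₁ : 0 < M₁) (hM₁₂ : M₁ ≤ M₂)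
    (σ : ℝ → ℝ) (hσC1 : ContDiff ℝ 1 σ)
    (hσderiv : ∀ x : ℝ, M₁ ≤ deriv σ x ∧ deriv σ x ≤ M₂)
    (hσ0 : σ 0 = 0) (hσsign : ∀ x : ℝ, 0 ≤ x * σ x)
    (W : Submodule ℝ H) [FiniteDimensional ℝ W]
    (hWbdd : ∀ f ∈ W, MemLp (⇑f) ⊤ volume)
    (f : H) (hf : f ∈ W) :
    M₁ * ‖f‖ ≤ ‖(Submodule.orthogonalProjectionOnto W (toLp2 fun x => σ (f x)) : H)‖ := by
  have hcont : Continuous σ := hσC1.continuous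
  have hdiff : Differentiable ℝ σ := hσC1.differentiable one_ne_zero
  have hlow : ∀ x y : ℝ, x ≤ y → M₁ * (y - x) ≤ σ y - σ x := by
    intro x y hxy
    exact mul_sub_le_image_sub_of_le_deriv hdiff (fun z => (hσderiv z).1) hxy
  have hhigh : ∀ x y : ℝ, x ≤ y → σ y - σ x ≤ M₂ * (y - x) := by
    intro x y hxy
    exact image_sub_le_mul_sub_of_deriv_le hdiff (fun z => (hσderiv z).2) hxy
  have hσm1 : ∀ t : ℝ, M₁ * t ^ 2 ≤ t * σ t := by
    intro t
    rcases le_total 0 t with h | h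
    · have := hlow 0 t h; nlinarith
    · have := hlow t 0 h; nlinarith
  have hσm2 : ∀ t : ℝ, |σ t| ≤ M₂ * |t| := by
    intro t
    rcases le_total 0 t with h | h
    · have h1 := hlow 0 t h
      have h2 := hhigh 0 t h
      rw [abs_of_nonneg h, abs_of_nonneg (by nlinarith)]
      nlinarith
    · have h1 := hlow t 0 h
      have h2 := hhigh t 0 h
      rw [abs_of_nonpos h, abs_of_nonpos (by nlinarith)]
      nlinarith
  set g : ℝ → ℝ := fun x => σ (f x) with hgdef
  have hfmem : MemLp (⇑f) 2 volume := Lp.memLp f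
  have hgm : AEStronglyMeasurable g volume :=
    hcont.comp_aestronglyMeasurable (Lp.aestronglyMeasurable f)
  have hgmem : MemLp g 2 volume :=
    hfmem.of_le_mul hgm (Filter.Eventually.of_forall fun x => by
      simpa [Real.norm_eq_abs, mul_comm] using hσm2 (f x))
  have htoLp : toLp2 g = hgmem.toLp g := by rw [toLp2, dif_pos hgmem]
  have hcoe : (toLp2 g : ℝ → ℝ) =ᵐ[volume] g := htoLp ▸ hgmem.coeFn_toLp
  -- key inner product inequality
  have key : 0 ≤ ⟪toLp2 g - M₁ • f, f⟫ := by
    rw [MeasureTheory.L2.inner_def]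
    apply integral_nonneg_of_ae
    filter_upwards [Lp.coeFn_sub (toLp2 g) (M₁ • f), Lp.coeFn_smul M₁ f, hcoe] with x hx hsm hgx
    rw [RCLike.inner_apply, conj_trivial, hx]
    simp only [Pi.sub_apply]
    rw [hsm, hgx]
    simp only [Pi.smul_apply, smul_eq_mul, Pi.zero_apply, hgdef]
    have := hσm1 (f x)
    nlinarith
  have hinner : M₁ * ‖f‖ ^ 2 ≤ ⟪toLp2 g, f⟫ := by
    rw [inner_sub_left, real_inner_smul_left, real_inner_self_eq_norm_sq] at key
    linarith
  -- projection
  have hproj : ⟪((Submodule.orthogonalProjectionOnto W (toLp2 g) : W) : H), f⟫ = ⟪toLp2 g, f⟫ := by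
    have h0 := W.starProjection_inner_eq_zero (toLp2 g) f hf
    rw [Submodule.starProjection_apply, inner_sub_left] at h0
    linarith
  have hle : M₁ * ‖f‖ ^ 2 ≤ ‖((Submodule.orthogonalProjectionOnto W (toLp2 g) : W) : H)‖ * ‖f‖ := by
    calc M₁ * ‖f‖ ^ 2 ≤ ⟪((Submodule.orthogonalProjectionOnto W (toLp2 g) : W) : H), f⟫ := by
          rw [hproj]; exact hinner
      _ ≤ ‖((Submodule.orthogonalProjectionOnto W (toLp2 g) : W) : H)‖ * ‖f‖ := real_inner_le_norm _ _
  rcases eq_or_lt_of_le (norm_nonneg f) with h0 | h0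
  · rw [← h0, mul_zero]
    exact norm_nonneg _
  · have hle' : (M₁ * ‖f‖) * ‖f‖ ≤ ‖((Submodule.orthogonalProjectionOnto W (toLp2 g) : W) : H)‖ * ‖f‖ := by
      nlinarith
    exact le_of_mul_le_mul_right hle' h0
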